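/- For a strict partition α = (α_1 > ⋯ > α_l > 0) with α_1 ≤ n-1, the extended Schur Q-function satisfies the Pfaffian identity: if l is even, Q̂_α(t,s) = Pf(Q̂_{(α_i,α_j)}(t,s))_{1≤i<j≤l}, and if l is odd, Q̂_α(t,s) = Pf(Q̂_{(α_i,α_j)}(t,s))_{1≤i<j≤l+1}, where α_{l+1} = 0 and Q̂_{(α_i,0)} = Q̂_{(α_i)}. -/

import Mathlib

open Finset

noncomputable def genFn (n : ℕ) (t : ℕ → ℂ) : PowerSeries ℂ :=
  ∑ k ∈ Finset.Icc 1 (n-1), (PowerSeries.monomial (2*k-1)) (t (2*k-1))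

noncomputable def qn (n : ℕ) (t : ℕ → ℂ) (m : ℕ) : ℂ :=
  ∑ k ∈ Finset.range (m+1), PowerSeries.coeff m (genFn n t ^ k) / (Nat.factorial k : ℂ)

noncomputable def pf {R : Type*} [CommRing R] : (m : ℕ) → Matrix (Fin (2*m)) (Fin (2*m)) R → R
  | 0, _ => 1
  | (m+1), M => ∑ i : Fin (2*m+1),
      (-1 : R)^(i:ℕ) * M i.castSucc (Fin.last (2*m+1)) *
        pf m (Matrix.of fun a b => M ((i.succAbove a).castSucc) ((i.succAbove b).castSucc))

noncomputable def Q2 (q : ℕ → ℂ) (i j : ℕ) : ℂ :=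
  q i * q j + 2 * ∑ k ∈ Finset.Icc 1 j, (-1:ℂ)^k * q (i+k) * q (j-k)

noncomputable def Qsp (q : ℕ → ℂ) (α : List ℕ) : ℂ :=
  pf ((α.length + 1)/2) (Matrix.of fun i j =>
    if (i:ℕ) < (j:ℕ) then Q2 q (α.getD (i:ℕ) 0) (α.getD (j:ℕ) 0)
    else if (j:ℕ) < (i:ℕ) then - Q2 q (α.getD (j:ℕ) 0) (α.getD (i:ℕ) 0) else 0)

noncomputable def Qhat (n : ℕ) (t : ℕ → ℂ) (s : ℂ) (α : List ℕ) : ℂ :=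
  if n - 1 ∈ α then Qsp (qn n t) α + (-1:ℂ)^n * s * Qsp (qn n t) (α.erase (n-1))
  else Qsp (qn n t) α

noncomputable def nPf (m : ℕ) (f : ℕ → ℕ → ℂ) : ℂ :=
  pf m (Matrix.of fun i j : Fin (2*m) => f i j)

def ee (i a : ℕ) : ℕ := if a < i then a else a + 1
def dd (v a : ℕ) : ℕ := if a + 1 < v then a + 1 else a + 2

lemma nPf_zero (f : ℕ → ℕ → ℂ) : nPf 0 f = 1 := rfl

lemma coe_succAbove {k : ℕ} (i : Fin (k+1)) (a : Fin k) :
    ((i.succAbove a : Fin (k+1)) : ℕ) = ee i a := by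
  rw [Fin.succAbove, ee]
  split_ifs with h1 h2 h2 <;>
    simp_all [Fin.lt_iff_val_lt_val, Fin.coe_castSucc, Fin.val_succ] <;> omega

lemma NREC (m : ℕ) (f : ℕ → ℕ → ℂ) :
    nPf (m+1) f = ∑ b ∈ Finset.range (2*m+1),
      (-1:ℂ)^b * f b (2*m+1) * nPf m (fun a c => f (ee b a) (ee b c)) := by
  rw [nPf, pf]
  rw [← Fin.sum_univ_eq_sum_range (fun b => (-1:ℂ)^b * f b (2*m+1) * nPf m (fun a c => f (ee b a) (ee b c))) (2*m+1)]
  refine Finset.sum_congr rfl fun i _ => ?_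
  have h1 : (Matrix.of fun i j : Fin (2*(m+1)) => f i j) i.castSucc (Fin.last (2*m+1))
      = f i (2*m+1) := by simp
  have h2 : pf m (Matrix.of fun a b => (Matrix.of fun i j : Fin (2*(m+1)) => f i j)
      ((i.succAbove a).castSucc) ((i.succAbove b).castSucc))
      = nPf m (fun a c => f (ee i a) (ee i c)) := by
    rw [nPf]; congr 1; ext a b
    simp [Fin.coe_castSucc, coe_succAbove]
  rw [h1, h2]

lemma nPf_congr : ∀ (m : ℕ) (f g : ℕ → ℕ → ℂ),
    (∀ a b, a < b → b < 2*m → f a b = g a b) → nPf m f = nPf m g := by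
  intro m
  induction m with
  | zero => intro f g _; rfl
  | succ m ih =>
    intro f g h
    rw [NREC, NREC]
    refine Finset.sum_congr rfl fun b hb => ?_
    simp only [Finset.mem_range] at hb
    rw [h b (2*m+1) (by omega) (by omega)]
    congr 1
    apply ih
    intro a c hac hc
    apply h <;> unfold ee <;> split_ifs <;> omega

lemma ROW0 : ∀ (m : ℕ) (f : ℕ → ℕ → ℂ),
    nPf (m+1) f = ∑ b ∈ Finset.range (2*m+1),
      (-1:ℂ)^b * f 0 (b+1) * nPf m (fun a c => f (dd (b+1) a) (dd (b+1) c)) := by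
  intro m
  induction m with
  | zero =>
    intro f
    rw [NREC]
    simp [nPf_zero]
  | succ m ih =>
    intro f
    rw [NREC]
    rw [Finset.sum_range_succ' _ (2*(m+1)), Finset.sum_range_succ _ (2*(m+1))]
    have hlast : nPf (m+1) (fun a c => f (ee 0 a) (ee 0 c))
        = nPf (m+1) (fun a c => f (dd (2*(m+1)+1) a) (dd (2*(m+1)+1) c)) := by
      apply nPf_congr
      intro a b hab hb
      have h1 : ∀ x, x < 2*(m+1) → ee 0 x = dd (2*(m+1)+1) x := by
        intro x hx; unfold ee dd; split_ifs <;> omega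
      rw [h1 a (by omega), h1 b hb]
    have hsgn : ((-1:ℂ))^(2*(m+1)) = 1 := by
      rw [pow_mul]; norm_num
    rw [hsgn]
    have hmain :
        (∑ i ∈ Finset.range (2*(m+1)), (-1:ℂ)^(i+1) * f (i+1) (2*(m+1)+1) *
          nPf (m+1) (fun a c => f (ee (i+1) a) (ee (i+1) c)))
        = ∑ b ∈ Finset.range (2*(m+1)), (-1:ℂ)^b * f 0 (b+1) *
          nPf (m+1) (fun a c => f (dd (b+1) a) (dd (b+1) c)) := by
      have step1 : (∑ i ∈ Finset.range (2*(m+1)), (-1:ℂ)^(i+1) * f (i+1) (2*(m+1)+1) *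
            nPf (m+1) (fun a c => f (ee (i+1) a) (ee (i+1) c)))
          = ∑ p ∈ Finset.range (2*(m+1)) ×ˢ Finset.range (2*m+1),
              (-1:ℂ)^(p.1+1) * (-1:ℂ)^p.2 * f (p.1+1) (2*(m+1)+1) *
              f (ee (p.1+1) 0) (ee (p.1+1) (p.2+1)) *
              nPf m (fun a c => f (ee (p.1+1) (dd (p.2+1) a)) (ee (p.1+1) (dd (p.2+1) c))) := by
        rw [Finset.sum_product]
        refine Finset.sum_congr rfl fun i _ => ?_
        rw [ih, Finset.mul_sum]
        refine Finset.sum_congr rfl fun b _ => ?_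
        ring
      have step2 : (∑ b ∈ Finset.range (2*(m+1)), (-1:ℂ)^b * f 0 (b+1) *
            nPf (m+1) (fun a c => f (dd (b+1) a) (dd (b+1) c)))
          = ∑ p ∈ Finset.range (2*(m+1)) ×ˢ Finset.range (2*m+1),
              (-1:ℂ)^p.1 * (-1:ℂ)^p.2 * f 0 (p.1+1) *
              f (dd (p.1+1) p.2) (dd (p.1+1) (2*m+1)) *
              nPf m (fun a c => f (dd (p.1+1) (ee p.2 a)) (dd (p.1+1) (ee p.2 c))) := by
        rw [Finset.sum_product]
        refine Finset.sum_congr rfl fun b _ => ?_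
        rw [NREC, Finset.mul_sum]
        refine Finset.sum_congr rfl fun j _ => ?_
        ring
      rw [step1, step2]
      refine Finset.sum_nbij'
        (i := fun p => if p.2 < p.1 then (p.2, p.1 - 1) else (p.2 + 1, p.1))
        (j := fun p => if p.2 < p.1 then (p.2, p.1 - 1) else (p.2 + 1, p.1))
        ?_ ?_ ?_ ?_ ?_
      · intro p hp
        simp only [Finset.mem_product, Finset.mem_range] at hp ⊢
        split_ifs <;> omega
      · intro p hp
        simp only [Finset.mem_product, Finset.mem_range] at hp ⊢
        split_ifs <;> omega
      · intro p hp
        simp only [Finset.mem_product, Finset.mem_range] at hp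
        obtain ⟨a, b⟩ := p
        dsimp only
        split_ifs <;> simp_all [Prod.ext_iff] <;> omega
      · intro p hp
        simp only [Finset.mem_product, Finset.mem_range] at hp
        obtain ⟨a, b⟩ := p
        dsimp only
        split_ifs <;> simp_all [Prod.ext_iff] <;> omega
      · intro p hp
        simp only [Finset.mem_product, Finset.mem_range] at hp
        obtain ⟨i, b⟩ := p
        simp only [Finset.mem_product, Finset.mem_range]
        by_cases hc : b < i
        · rw [if_pos hc]
          have e0 : ee (i+1) 0 = 0 := by unfold ee; split_ifs <;> omega
          have e1 : ee (i+1) (b+1) = b+1 := by unfold ee; split_ifs <;> omega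
          have e2 : dd (b+1) (i-1) = i+1 := by unfold dd; split_ifs <;> omega
          have e3 : dd (b+1) (2*m+1) = 2*(m+1)+1 := by
            unfold dd; split_ifs <;> omega
          have e4 : ∀ x, ee (i+1) (dd (b+1) x) = dd (b+1) (ee (i-1) x) := by
            intro x; unfold ee dd; split_ifs <;> omega
          have e5 : ((-1:ℂ))^(i+1) = (-1:ℂ)^(i-1) := by
            have : i+1 = (i-1)+2 := by omega
            rw [this, pow_add]; norm_num
          have e6 : nPf m (fun a c => f (ee (i+1) (dd (b+1) a)) (ee (i+1) (dd (b+1) c)))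
              = nPf m (fun a c => f (dd (b+1) (ee (i-1) a)) (dd (b+1) (ee (i-1) c))) := by
            congr 1; funext a c; rw [e4 a, e4 c]
          simp only [e0, e1, e2, e3, e5, e6]
          ring
        · rw [if_neg hc]
          have e0 : ee (i+1) 0 = 0 := by unfold ee; split_ifs <;> omega
          have e1 : ee (i+1) (b+1) = b+2 := by unfold ee; split_ifs <;> omega
          have e2 : dd (b+2) i = i+1 := by unfold dd; split_ifs <;> omega
          have e3 : dd (b+2) (2*m+1) = 2*(m+1)+1 := by
            unfold dd; split_ifs <;> omega
          have e4 : ∀ x, ee (i+1) (dd (b+1) x) = dd (b+2) (ee i x) := by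
            intro x; unfold ee dd; split_ifs <;> omega
          have e6 : nPf m (fun a c => f (ee (i+1) (dd (b+1) a)) (ee (i+1) (dd (b+1) c)))
              = nPf m (fun a c => f (dd (b+2) (ee i a)) (dd (b+2) (ee i c))) := by
            congr 1; funext a c; rw [e4 a, e4 c]
          simp only [e0, e1, e2, e3, e6]
          ring
    rw [hmain, hlast]
    ring

lemma cancelZ (M : ℕ) (h : ℕ → ℕ → ℂ) (v : ℕ → ℂ)
    (hv : ∀ a, a < 2*M → h a (2*M) = v a) :
    ∑ b ∈ Finset.range (2*M), (-1:ℂ)^b * v b *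
      nPf M (fun a c => h (ee b a) (ee b c)) = 0 := by
  cases M with
  | zero => simp
  | succ μ =>
    have expand : ∀ b ∈ Finset.range (2*(μ+1)),
        (-1:ℂ)^b * v b * nPf (μ+1) (fun a c => h (ee b a) (ee b c))
        = ∑ j ∈ Finset.range (2*μ+1), (-1:ℂ)^b * (-1:ℂ)^j * v b * v (ee b j) *
            nPf μ (fun a c => h (ee b (ee j a)) (ee b (ee j c))) := by
      intro b hb
      simp only [Finset.mem_range] at hb
      rw [NREC, Finset.mul_sum]
      refine Finset.sum_congr rfl fun j hj => ?_
      simp only [Finset.mem_range] at hj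
      have e1 : ee b (2*μ+1) = 2*(μ+1) := by unfold ee; split_ifs <;> omega
      have e2 : h (ee b j) (ee b (2*μ+1)) = v (ee b j) := by
        rw [e1]; exact hv _ (by unfold ee; split_ifs <;> omega)
      rw [e2]  -- might not fire directly; the term is h (ee b j) (ee b (2*μ+1))
      ring
    rw [Finset.sum_congr rfl expand, ← Finset.sum_product']
    refine Finset.sum_involution
      (fun p _ => if p.2 < p.1 then (p.2, p.1 - 1) else (p.2 + 1, p.1))
      ?_ ?_ ?_ ?_
    · intro p hp
      simp only [Finset.mem_product, Finset.mem_range] at hp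
      obtain ⟨b, j⟩ := p
      dsimp only at hp ⊢
      by_cases hc : j < b
      · rw [if_pos hc]
        dsimp only
        have e1 : ee b j = j := by unfold ee; split_ifs <;> omega
        have e2 : ee j (b-1) = b := by unfold ee; split_ifs <;> omega
        have e3 : ∀ x, ee b (ee j x) = ee j (ee (b-1) x) := by
          intro x; unfold ee; split_ifs <;> omega
        have e4 : nPf μ (fun a c => h (ee b (ee j a)) (ee b (ee j c)))
            = nPf μ (fun a c => h (ee j (ee (b-1) a)) (ee j (ee (b-1) c))) := by
          congr 1; funext a c; rw [e3 a, e3 c]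
        have e5 : ((-1:ℂ))^b = -((-1:ℂ))^(b-1) := by
          conv_lhs => rw [show b = (b-1)+1 from by omega]
          rw [pow_succ]; ring
        simp only [e1, e2, e4, e5]
        ring
      · rw [if_neg hc]
        dsimp only
        have e1 : ee b j = j+1 := by unfold ee; split_ifs <;> omega
        have e2 : ee (j+1) b = b := by unfold ee; split_ifs <;> omega
        have e3 : ∀ x, ee b (ee j x) = ee (j+1) (ee b x) := by
          intro x; unfold ee; split_ifs <;> omega
        have e4 : nPf μ (fun a c => h (ee b (ee j a)) (ee b (ee j c)))
            = nPf μ (fun a c => h (ee (j+1) (ee b a)) (ee (j+1) (ee b c))) := by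
          congr 1; funext a c; rw [e3 a, e3 c]
        simp only [e1, e2, e4]
        ring
    · intro p hp _
      obtain ⟨b, j⟩ := p
      dsimp only
      split_ifs <;> simp [Prod.ext_iff] <;> omega
    · intro p hp
      simp only [Finset.mem_product, Finset.mem_range] at hp ⊢
      obtain ⟨b, j⟩ := p
      dsimp only
      split_ifs <;> simp <;> omega
    · intro p hp
      simp only [Finset.mem_product, Finset.mem_range] at hp
      obtain ⟨b, j⟩ := p
      dsimp only at hp ⊢
      split_ifs <;> simp_all [Prod.ext_iff] <;> omega

lemma qn_zero (n : ℕ) (t : ℕ → ℂ) : qn n t 0 = 1 := by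
  simp [qn]

lemma Q2_zero_right (q : ℕ → ℂ) (a : ℕ) : Q2 q a 0 = q a * q 0 := by
  simp [Q2]

lemma nPf_one (f : ℕ → ℕ → ℂ) : nPf 1 f = f 0 1 := by
  have := NREC 0 f
  simpa [nPf_zero] using this

lemma Qsp_eq (q : ℕ → ℂ) (β : List ℕ) :
    Qsp q β = nPf ((β.length + 1)/2) (fun a b =>
      if a < b then Q2 q (β.getD a 0) (β.getD b 0)
      else if b < a then - Q2 q (β.getD b 0) (β.getD a 0) else 0) := rfl

lemma Qsp_eq' (q : ℕ → ℂ) (β : List ℕ) :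
    Qsp q β = nPf ((β.length + 1)/2) (fun a b => Q2 q (β.getD a 0) (β.getD b 0)) := by
  rw [Qsp_eq]
  apply nPf_congr
  intro a b hab _
  rw [if_pos hab]

lemma Qsp_pair (q : ℕ → ℂ) (a b : ℕ) : Qsp q [a, b] = Q2 q a b := by
  have h : (([a,b] : List ℕ).length + 1)/2 = 1 := by simp
  rw [Qsp_eq', h, nPf_one]
  simp

lemma Qsp_single (q : ℕ → ℂ) (a : ℕ) : Qsp q [a] = Q2 q a 0 := by
  have h : (([a] : List ℕ).length + 1)/2 = 1 := by simp
  rw [Qsp_eq', h, nPf_one]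
  simp


lemma core (q : ℕ → ℂ) (hq0 : q 0 = 1) (K : ℂ) (x y : ℕ → ℕ) (L : ℕ)
    (hxy : ∀ c, x (c+1) = y c) (hyL : ∀ c, L ≤ c → y c = 0) (f : ℕ → ℕ → ℂ)
    (hf0 : ∀ b, 0 < b → f 0 b = Q2 q (x 0) (x b) + K * Q2 q (x b) 0)
    (hf : ∀ a b, 1 ≤ a → a < b → f a b = Q2 q (x a) (x b)) :
    nPf (L/2 + 1) f
      = nPf (L/2 + 1) (fun a b => Q2 q (x a) (x b))
        + K * nPf ((L+1)/2) (fun a b => Q2 q (y a) (y b)) := by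
  have hdd1 : ∀ b z, 1 ≤ dd (b+1) z := by intro b z; unfold dd; split_ifs <;> omega
  have hddm : ∀ b a c, a < c → dd (b+1) a < dd (b+1) c := by
    intro b a c h; unfold dd; split_ifs <;> omega
  have hde : ∀ b z, dd (b+1) z = ee b z + 1 := by
    intro b z; unfold dd ee; split_ifs <;> omega
  have hdec : nPf (L/2+1) f = nPf (L/2+1) (fun a b => Q2 q (x a) (x b))
      + K * nPf (L/2+1) (fun a b => if a = 0 then Q2 q (x b) 0 else Q2 q (x a) (x b)) := by
    rw [ROW0 (L/2) f, ROW0 (L/2) (fun a b => Q2 q (x a) (x b)),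
      ROW0 (L/2) (fun a b => if a = 0 then Q2 q (x b) 0 else Q2 q (x a) (x b)),
      Finset.mul_sum, ← Finset.sum_add_distrib]
    simp only [reduceIte]
    refine Finset.sum_congr rfl fun b hb => ?_
    have hs1 : nPf (L/2) (fun a c => f (dd (b+1) a) (dd (b+1) c))
        = nPf (L/2) (fun a c => Q2 q (x (dd (b+1) a)) (x (dd (b+1) c))) := by
      apply nPf_congr; intro a c hac _
      exact hf _ _ (hdd1 b a) (hddm b a c hac)
    have hs2 : nPf (L/2) (fun a c => if dd (b+1) a = 0 then Q2 q (x (dd (b+1) c)) 0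
          else Q2 q (x (dd (b+1) a)) (x (dd (b+1) c)))
        = nPf (L/2) (fun a c => Q2 q (x (dd (b+1) a)) (x (dd (b+1) c))) := by
      apply nPf_congr; intro a c hac _
      rw [if_neg (by have := hdd1 b a; omega)]
    rw [hs1, hs2, hf0 (b+1) (by omega)]
    ring
  rw [hdec]
  have hsubG : ∀ b, nPf (L/2) (fun a c => if dd (b+1) a = 0 then Q2 q (x (dd (b+1) c)) 0
        else Q2 q (x (dd (b+1) a)) (x (dd (b+1) c)))
      = nPf (L/2) (fun a c => Q2 q (y (ee b a)) (y (ee b c))) := by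
    intro b
    congr 1; funext a c
    rw [if_neg (by have := hdd1 b a; omega), hde, hde, hxy, hxy]
  suffices hGD : nPf (L/2+1) (fun a b => if a = 0 then Q2 q (x b) 0 else Q2 q (x a) (x b))
      = nPf ((L+1)/2) (fun a b => Q2 q (y a) (y b)) by rw [hGD]
  obtain ⟨M, hM⟩ : ∃ M, L = 2*M ∨ L = 2*M+1 := ⟨L/2, by omega⟩
  rcases hM with hM | hM
  · -- L = 2M : cancellation case
    subst hM
    rw [show 2*M/2 = M from by omega, show (2*M+1)/2 = M from by omega] at *
    rw [ROW0 M (fun a b => if a = 0 then Q2 q (x b) 0 else Q2 q (x a) (x b))]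
    simp only [reduceIte]
    rw [Finset.sum_range_succ]
    have hg : Q2 q (x (2*M+1)) 0 = 1 := by
      rw [show x (2*M+1) = 0 from by rw [hxy]; exact hyL _ le_rfl,
        Q2_zero_right, hq0, mul_one]
    have hlast : nPf M (fun a c => if dd (2*M+1) a = 0 then Q2 q (x (dd (2*M+1) c)) 0
          else Q2 q (x (dd (2*M+1) a)) (x (dd (2*M+1) c)))
        = nPf M (fun a b => Q2 q (y a) (y b)) := by
      apply nPf_congr; intro a c hac hc
      have hda : dd (2*M+1) a = a+1 := by unfold dd; split_ifs <;> omega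
      have hdc : dd (2*M+1) c = c+1 := by unfold dd; split_ifs <;> omega
      rw [if_neg (by omega), hda, hdc, hxy, hxy]
    have hzero : ∑ b ∈ Finset.range (2*M), (-1:ℂ)^b * Q2 q (x (b+1)) 0 *
          nPf M (fun a c => if dd (b+1) a = 0 then Q2 q (x (dd (b+1) c)) 0
            else Q2 q (x (dd (b+1) a)) (x (dd (b+1) c)))
        = 0 := by
      have hc := cancelZ M (fun a b => Q2 q (y a) (y b)) (fun b => Q2 q (y b) 0)
        (by intro a _
            show Q2 q (y a) (y (2*M)) = Q2 q (y a) 0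
            rw [hyL (2*M) le_rfl])
      rw [← hc]
      refine Finset.sum_congr rfl fun b hb => ?_
      rw [show Q2 q (x (b+1)) 0 = Q2 q (y b) 0 from by rw [hxy], hsubG b]
    rw [hzero, hg, hlast]
    rw [show ((-1:ℂ))^(2*M) = 1 from by rw [pow_mul]; norm_num]
    ring
  · -- L = 2M+1 : relabeling case
    subst hM
    rw [show (2*M+1)/2 = M from by omega, show (2*M+1+1)/2 = M+1 from by omega] at *
    rw [ROW0 M (fun a b => if a = 0 then Q2 q (x b) 0 else Q2 q (x a) (x b))]
    simp only [reduceIte]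
    rw [NREC M (fun a b => Q2 q (y a) (y b))]
    refine Finset.sum_congr rfl fun b hb => ?_
    rw [hsubG b]
    rw [show Q2 q (x (b+1)) 0 = Q2 q (y b) (y (2*M+1)) from by
      rw [hxy, hyL (2*M+1) le_rfl]]


theorem stmt1 (n : ℕ) (hn : 2 ≤ n) (t : ℕ → ℂ) (s : ℂ) (α : List ℕ)
    (hsd : List.Pairwise (· > ·) α) (hpos : ∀ a ∈ α, 0 < a) (hbd : ∀ a ∈ α, a ≤ n - 1) :
    Qhat n t s α = pf ((α.length + 1)/2) (Matrix.of fun i j =>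
      if (i:ℕ) < (j:ℕ) then Qhat n t s [α.getD (i:ℕ) 0, α.getD (j:ℕ) 0]
      else if (j:ℕ) < (i:ℕ) then - Qhat n t s [α.getD (j:ℕ) 0, α.getD (i:ℕ) 0]
      else 0) := by
  have hn1 : 1 ≤ n - 1 := by omega
  -- pass to nPf form
  show Qhat n t s α = nPf ((α.length + 1)/2) (fun a b =>
      if a < b then Qhat n t s [α.getD a 0, α.getD b 0]
      else if b < a then - Qhat n t s [α.getD b 0, α.getD a 0] else 0)
  by_cases h1 : n - 1 ∈ α
  · obtain ⟨tl, rfl⟩ : ∃ tl, α = (n-1) :: tl := by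
      cases α with
      | nil => simp at h1
      | cons hd tl =>
        refine ⟨tl, ?_⟩
        rcases List.mem_cons.mp h1 with h | h
        · rw [h]
        · have h2 : hd > n - 1 := (List.pairwise_cons.mp hsd).1 _ h
          have h3 : hd ≤ n - 1 := hbd hd List.mem_cons_self
          omega
    have htl : ∀ w ∈ tl, w < n - 1 := (List.pairwise_cons.mp hsd).1
    have hx0 : ((n-1) :: tl).getD 0 0 = n - 1 := by simp
    have hxy : ∀ c, ((n-1) :: tl).getD (c+1) 0 = tl.getD c 0 := by
      intro c; simp
    have hxne : ∀ c, 1 ≤ c → ((n-1) :: tl).getD c 0 ≠ n - 1 := by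
      intro c hc
      obtain ⟨c', rfl⟩ : ∃ c', c = c'+1 := ⟨c-1, by omega⟩
      rw [hxy]
      by_cases h : c' < tl.length
      · rw [List.getD_eq_getElem _ _ h]
        have := htl _ (List.getElem_mem h)
        omega
      · rw [List.getD_eq_default _ _ (by omega)]
        omega
    have hpair0 : ∀ w, w ≠ n - 1 → Qhat n t s [n-1, w]
        = Q2 (qn n t) (n-1) w + (-1:ℂ)^n * s * Q2 (qn n t) w 0 := by
      intro w hw
      rw [Qhat, if_pos List.mem_cons_self, List.erase_cons_head, Qsp_pair, Qsp_single]
    have hpair : ∀ u w, u ≠ n-1 → w ≠ n-1 → Qhat n t s [u, w] = Q2 (qn n t) u w := by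
      intro u w hu hw
      rw [Qhat, if_neg ?_, Qsp_pair]
      intro hmem
      rcases List.mem_cons.mp hmem with h | h
      · exact hu h.symm
      · rcases List.mem_cons.mp h with h' | h'
        · exact hw h'.symm
        · simp at h'
    rw [Qhat, if_pos h1, List.erase_cons_head, Qsp_eq', Qsp_eq']
    simp only [List.length_cons]
    rw [show (tl.length+1+1)/2 = tl.length/2+1 from by omega]
    have hf0 : ∀ b, 0 < b →
        (if 0 < b then Qhat n t s [((n-1)::tl).getD 0 0, ((n-1)::tl).getD b 0]
         else if b < 0 then - Qhat n t s [((n-1)::tl).getD b 0, ((n-1)::tl).getD 0 0] else 0)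
        = Q2 (qn n t) (((n-1)::tl).getD 0 0) (((n-1)::tl).getD b 0)
          + (-1:ℂ)^n * s * Q2 (qn n t) (((n-1)::tl).getD b 0) 0 := by
      intro b hb
      rw [if_pos hb, hx0, hpair0 _ (hxne b hb)]
    have hf : ∀ a b, 1 ≤ a → a < b →
        (if a < b then Qhat n t s [((n-1)::tl).getD a 0, ((n-1)::tl).getD b 0]
         else if b < a then - Qhat n t s [((n-1)::tl).getD b 0, ((n-1)::tl).getD a 0] else 0)
        = Q2 (qn n t) (((n-1)::tl).getD a 0) (((n-1)::tl).getD b 0) := by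
      intro a b ha hab
      rw [if_pos hab, hpair _ _ (hxne a ha) (hxne b (by omega))]
    exact (core (qn n t) (qn_zero n t) ((-1:ℂ)^n * s)
      (fun a => ((n-1)::tl).getD a 0) (fun a => tl.getD a 0) tl.length
      hxy (fun c hc => List.getD_eq_default _ _ hc) _ hf0 hf).symm
  · -- easy case
    rw [Qhat, if_neg h1]
    have hxne : ∀ c, α.getD c 0 ≠ n - 1 := by
      intro c
      by_cases hc : c < α.length
      · rw [List.getD_eq_getElem _ _ hc]
        intro hEq
        exact h1 (hEq ▸ List.getElem_mem hc)
      · rw [List.getD_eq_default _ _ (by omega)]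
        omega
    rw [Qsp_eq']
    apply nPf_congr
    intro a b hab _
    rw [if_pos hab, Qhat, if_neg ?_, Qsp_pair]
    intro hmem
    rcases List.mem_cons.mp hmem with h | h
    · exact hxne a h.symm
    · rcases List.mem_cons.mp h with h' | h'
      · exact hxne b h'.symm
      · simp at h'
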